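/- Limiting variance of the adaptive-smoothing estimator: define D_ad(x) := 1{τ(x)>0} + π₁(x)·1{τ(x)=0}. Under homoscedasticity, Var(ψ(D_ad, π₁, (μ₁,μ₀))) = Var(d₀(X)·μ₁(X)+(1−d₀(X))·μ₀(X)) + E[σ²(X)·(1{τ(X)>0}/π₁(X) + 1{τ(X)<0}/(1−π₁(X)))] + E[σ²(X)·1{τ(X)=0}]. -/

import Mathlib

open MeasureTheory ProbabilityTheory Filter Topology
open scoped Classical

section helpers
variable {Ω : Type*} {mΩ : MeasurableSpace Ω} {P : Measure Ω}

lemma intL2mul [IsFiniteMeasure P] {f g : Ω → ℝ} (hf : MemLp f 2 P) (hg : MemLp g 2 P) :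
    Integrable (fun ω => f ω * g ω) P := by
  refine Integrable.mono' (hf.integrable_sq.add hg.integrable_sq)
    (hf.aestronglyMeasurable.mul hg.aestronglyMeasurable)
    (Filter.Eventually.of_forall fun ω => ?_)
  simp only [Pi.add_apply, Real.norm_eq_abs, abs_mul]
  nlinarith [sq_nonneg (|f ω| - |g ω|), sq_abs (f ω), sq_abs (g ω), abs_nonneg (f ω),
    abs_nonneg (g ω), sq_nonneg (f ω), sq_nonneg (g ω)]

lemma memL2bddMul {f g : Ω → ℝ} (hf : AEStronglyMeasurable f P) (hg : MemLp g 2 P)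
    {C : ℝ} (hC : ∀ ω, |f ω| ≤ C) : MemLp (fun ω => f ω * g ω) 2 P := by
  refine MemLp.of_le (hg.const_mul C) (hf.mul hg.aestronglyMeasurable)
    (Filter.Eventually.of_forall fun ω => ?_)
  have h0 : 0 ≤ C := le_trans (abs_nonneg _) (hC ω)
  rw [Real.norm_eq_abs, Real.norm_eq_abs, abs_mul, abs_mul, abs_of_nonneg h0]
  exact mul_le_mul_of_nonneg_right (hC ω) (abs_nonneg _)

lemma memL2bddMul' {f g : Ω → ℝ} (hf : MemLp f 2 P) (hg : AEStronglyMeasurable g P)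
    {C : ℝ} (hC : ∀ ω, |g ω| ≤ C) : MemLp (fun ω => f ω * g ω) 2 P := by
  refine MemLp.of_le (hf.const_mul C) (hf.aestronglyMeasurable.mul hg)
    (Filter.Eventually.of_forall fun ω => ?_)
  have h0 : 0 ≤ C := le_trans (abs_nonneg _) (hC ω)
  rw [Real.norm_eq_abs, Real.norm_eq_abs, abs_mul, abs_mul, abs_of_nonneg h0, mul_comm (|f ω|)]
  exact mul_le_mul_of_nonneg_right (hC ω) (abs_nonneg _)

lemma intMulBddRight {f g : Ω → ℝ} (hf : Integrable f P) (hg : AEStronglyMeasurable g P)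
    {C : ℝ} (hC : ∀ ω, |g ω| ≤ C) : Integrable (fun ω => f ω * g ω) P := by
  have h := hf.bdd_mul hg (c := C) (ae_of_all _ fun ω => by simpa [Real.norm_eq_abs] using hC ω)
  exact h.congr (Filter.Eventually.of_forall fun ω => mul_comm _ _)

lemma intMulBddLeft {f g : Ω → ℝ} (hg : Integrable g P) (hf : AEStronglyMeasurable f P)
    {C : ℝ} (hC : ∀ ω, |f ω| ≤ C) : Integrable (fun ω => f ω * g ω) P :=
  hg.bdd_mul hf (c := C) (ae_of_all _ fun ω => by simpa [Real.norm_eq_abs] using hC ω)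

lemma pullout {m : MeasurableSpace Ω} (hm : m ≤ mΩ) [IsProbabilityMeasure P]
    {f g k : Ω → ℝ} (hf : StronglyMeasurable[m] f)
    (hg : Integrable g P) (hfg : Integrable (fun ω => f ω * g ω) P)
    (hk : P[g|m] =ᵐ[P] k) :
    ∫ ω, f ω * g ω ∂P = ∫ ω, f ω * k ω ∂P := by
  have h2 : P[(fun ω => f ω * g ω)|m] =ᵐ[P] fun ω => f ω * k ω := by
    have h1 : P[(fun ω => f ω * g ω)|m] =ᵐ[P] fun ω => f ω * (P[g|m]) ω :=
      condExp_mul_of_stronglyMeasurable_left hf hfg hg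
    filter_upwards [h1, hk] with ω ha hb
    rw [ha, hb]
  rw [← integral_condExp hm (f := fun ω => f ω * g ω)]
  exact integral_congr_ae h2

end helpers

/-- AIPW score `ψ(D, p, (m₁, m₀))` evaluated at a sample point `ω`. -/
noncomputable def aipw {Ω 𝒳 : Type*} (X : Ω → 𝒳) (A Y : Ω → ℝ)
    (D p m₁ m₀ : 𝒳 → ℝ) (ω : Ω) : ℝ :=
  (A ω * D (X ω) + (1 - A ω) * (1 - D (X ω))) /
      (A ω * p (X ω) + (1 - A ω) * (1 - p (X ω))) *
    (Y ω - (A ω * m₁ (X ω) + (1 - A ω) * m₀ (X ω)))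
  + D (X ω) * m₁ (X ω) + (1 - D (X ω)) * m₀ (X ω)

/-- Limiting variance of the adaptive-smoothing estimator: define
`D_ad(x) := 1{τ(x)>0} + π₁(x)·1{τ(x)=0}` with `τ = μ₁ − μ₀`. Under homoscedasticity
(`σ₁² = σ₀² = σ²` a.e. under the law of `X`),
`Var(ψ(D_ad, π₁, (μ₁,μ₀))) = Var(d₀(X)μ₁(X)+(1−d₀(X))μ₀(X))
 + E[σ²(X)·(1{τ(X)>0}/π₁(X) + 1{τ(X)<0}/(1−π₁(X)))] + E[σ²(X)·1{τ(X)=0}]`. -/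
theorem stmt_11 {Ω 𝒳 : Type*} [MeasurableSpace Ω] [MeasurableSpace 𝒳]
    (P : Measure Ω) [IsProbabilityMeasure P]
    (X : Ω → 𝒳) (A Y : Ω → ℝ)
    (hX : Measurable X) (hA : Measurable A) (hY : Measurable Y)
    (hAbin : ∀ ω, A ω = 0 ∨ A ω = 1) (hYL2 : MemLp Y 2 P)
    (c : ℝ) (hc : c ∈ Set.Ioo (0 : ℝ) (1 / 2))
    (π₁ : 𝒳 → ℝ) (hπ₁m : Measurable π₁) (hπ₁r : ∀ x, π₁ x ∈ Set.Icc c (1 - c))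
    (hcondA : P[A | MeasurableSpace.comap X inferInstance]
      =ᵐ[P] fun ω => π₁ (X ω))
    (μ₁ μ₀ : 𝒳 → ℝ) (hμ₁m : Measurable μ₁) (hμ₀m : Measurable μ₀)
    (hμ₁L2 : MemLp (fun ω => μ₁ (X ω)) 2 P) (hμ₀L2 : MemLp (fun ω => μ₀ (X ω)) 2 P)
    (hcond1 : P[fun ω => A ω * Y ω | MeasurableSpace.comap X inferInstance]
      =ᵐ[P] fun ω => μ₁ (X ω) * π₁ (X ω))
    (hcond0 : P[fun ω => (1 - A ω) * Y ω | MeasurableSpace.comap X inferInstance]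
      =ᵐ[P] fun ω => μ₀ (X ω) * (1 - π₁ (X ω)))
    (σ₁sq σ₀sq : 𝒳 → ℝ) (hσ₁m : Measurable σ₁sq) (hσ₀m : Measurable σ₀sq)
    (hσ₁nn : ∀ x, 0 ≤ σ₁sq x) (hσ₀nn : ∀ x, 0 ≤ σ₀sq x)
    (hσ₁L1 : Integrable (fun ω => σ₁sq (X ω)) P)
    (hσ₀L1 : Integrable (fun ω => σ₀sq (X ω)) P)
    (hcondsq1 : P[fun ω => A ω * Y ω ^ 2 | MeasurableSpace.comap X inferInstance]
      =ᵐ[P] fun ω => (μ₁ (X ω) ^ 2 + σ₁sq (X ω)) * π₁ (X ω))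
    (hcondsq0 : P[fun ω => (1 - A ω) * Y ω ^ 2 | MeasurableSpace.comap X inferInstance]
      =ᵐ[P] fun ω => (μ₀ (X ω) ^ 2 + σ₀sq (X ω)) * (1 - π₁ (X ω)))
    (σsq : 𝒳 → ℝ) (hσm : Measurable σsq)
    (hhomo1 : (fun x => σ₁sq x) =ᵐ[Measure.map X P] σsq)
    (hhomo0 : (fun x => σ₀sq x) =ᵐ[Measure.map X P] σsq)
    (Dad : 𝒳 → ℝ)
    (hDad : ∀ x, Dad x = (if 0 < μ₁ x - μ₀ x then (1 : ℝ) else 0)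
      + π₁ x * (if μ₁ x - μ₀ x = 0 then (1 : ℝ) else 0))
    (d₀ : 𝒳 → ℝ) (hd₀ : ∀ x, d₀ x = if 0 < μ₁ x - μ₀ x then (1 : ℝ) else 0) :
    variance (aipw X A Y Dad π₁ μ₁ μ₀) P
      = variance (fun ω => d₀ (X ω) * μ₁ (X ω) + (1 - d₀ (X ω)) * μ₀ (X ω)) P
        + ∫ ω, σsq (X ω) * ((if 0 < μ₁ (X ω) - μ₀ (X ω) then (1 : ℝ) else 0) / π₁ (X ω)
            + (if μ₁ (X ω) - μ₀ (X ω) < 0 then (1 : ℝ) else 0) / (1 - π₁ (X ω))) ∂P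
        + ∫ ω, σsq (X ω) * (if μ₁ (X ω) - μ₀ (X ω) = 0 then (1 : ℝ) else 0) ∂P := by
  classical
  -- basic numeric facts
  have hc0 : (0:ℝ) < c := hc.1
  have hπge : ∀ x, c ≤ π₁ x := fun x => (hπ₁r x).1
  have hπle : ∀ x, π₁ x ≤ 1 - c := fun x => (hπ₁r x).2
  have hπpos : ∀ x, 0 < π₁ x := fun x => lt_of_lt_of_le hc0 (hπge x)
  have h1πge : ∀ x, c ≤ 1 - π₁ x := fun x => by have := hπle x; linarith
  have h1πpos : ∀ x, 0 < 1 - π₁ x := fun x => lt_of_lt_of_le hc0 (h1πge x)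
  -- sigma algebra
  have hm := hX.comap_le
  have hXm : @Measurable Ω 𝒳 (MeasurableSpace.comap X inferInstance) _ X :=
    fun s hs => ⟨s, hs, rfl⟩
  have smc : ∀ (h : 𝒳 → ℝ), Measurable h →
      StronglyMeasurable[MeasurableSpace.comap X inferInstance] (fun ω => h (X ω)) :=
    fun h hh => (hh.comp hXm).stronglyMeasurable
  -- values of Dad
  have hDneg : ∀ x, μ₁ x - μ₀ x < 0 → Dad x = 0 := fun x h => by
    rw [hDad x, if_neg (by linarith), if_neg h.ne]; ring
  have hDzero : ∀ x, μ₁ x - μ₀ x = 0 → Dad x = π₁ x := fun x h => by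
    rw [hDad x, if_neg (by rw [h]; exact lt_irrefl 0), if_pos h]; ring
  have hDpos : ∀ x, 0 < μ₁ x - μ₀ x → Dad x = 1 := fun x h => by
    rw [hDad x, if_pos h, if_neg h.ne']; ring
  have hDad01 : ∀ x, 0 ≤ Dad x ∧ Dad x ≤ 1 := by
    intro x
    rcases lt_trichotomy (μ₁ x - μ₀ x) 0 with h | h | h
    · rw [hDneg x h]; constructor <;> norm_num
    · rw [hDzero x h]
      have := hπge x; have := hπle x
      constructor <;> [linarith; linarith [hc0]]
    · rw [hDpos x h]; constructor <;> norm_num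
  -- the functions F1, F0, V, W
  set F1 : 𝒳 → ℝ := fun x => Dad x / π₁ x with hF1def
  set F0 : 𝒳 → ℝ := fun x => (1 - Dad x) / (1 - π₁ x) with hF0def
  set V : 𝒳 → ℝ := fun x => Dad x * μ₁ x + (1 - Dad x) * μ₀ x with hVdef
  set W : Ω → ℝ := fun ω => F1 (X ω) * (A ω * Y ω) - F1 (X ω) * μ₁ (X ω) * A ω
      + F0 (X ω) * ((1 - A ω) * Y ω) - F0 (X ω) * μ₀ (X ω) * (1 - A ω) with hWdef
  -- measurability
  have hτm : Measurable fun x => μ₁ x - μ₀ x := hμ₁m.sub hμ₀m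
  have hE1m : Measurable fun x => (if 0 < μ₁ x - μ₀ x then (1:ℝ) else 0) :=
    Measurable.ite (measurableSet_lt measurable_const hτm) measurable_const measurable_const
  have hE0m : Measurable fun x => (if μ₁ x - μ₀ x < 0 then (1:ℝ) else 0) :=
    Measurable.ite (measurableSet_lt hτm measurable_const) measurable_const measurable_const
  have hEEm : Measurable fun x => (if μ₁ x - μ₀ x = 0 then (1:ℝ) else 0) :=
    Measurable.ite (hτm (measurableSet_singleton 0)) measurable_const measurable_const
  have hDadm : Measurable Dad := by
    have hEq : Dad = fun x => (if 0 < μ₁ x - μ₀ x then (1:ℝ) else 0)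
        + π₁ x * (if μ₁ x - μ₀ x = 0 then (1:ℝ) else 0) := funext hDad
    rw [hEq]; exact hE1m.add (hπ₁m.mul hEEm)
  have hF1m : Measurable F1 := hDadm.div hπ₁m
  have hF0m : Measurable F0 := (measurable_const.sub hDadm).div (measurable_const.sub hπ₁m)
  have hVm : Measurable V := (hDadm.mul hμ₁m).add ((measurable_const.sub hDadm).mul hμ₀m)
  -- bounds
  have hF1bd : ∀ x, |F1 x| ≤ 1 / c := by
    intro x
    have h1 := (hDad01 x).1; have h2 := (hDad01 x).2
    have hπ := hπpos x
    rw [show F1 x = Dad x / π₁ x from rfl, abs_of_nonneg (div_nonneg h1 hπ.le),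
      div_le_div_iff₀ hπ hc0]
    nlinarith [hπge x]
  have hF0bd : ∀ x, |F0 x| ≤ 1 / c := by
    intro x
    have h1 := (hDad01 x).1; have h2 := (hDad01 x).2
    have hπ := h1πpos x
    rw [show F0 x = (1 - Dad x) / (1 - π₁ x) from rfl,
      abs_of_nonneg (div_nonneg (by linarith) hπ.le), div_le_div_iff₀ hπ hc0]
    nlinarith [h1πge x]
  have hF1sqbd : ∀ x, |F1 x ^ 2| ≤ (1 / c) ^ 2 := fun x => by
    rw [abs_pow]; exact pow_le_pow_left₀ (abs_nonneg _) (hF1bd x) 2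
  have hF0sqbd : ∀ x, |F0 x ^ 2| ≤ (1 / c) ^ 2 := fun x => by
    rw [abs_pow]; exact pow_le_pow_left₀ (abs_nonneg _) (hF0bd x) 2
  have hπbd : ∀ x, |π₁ x| ≤ 1 := fun x => by
    rw [abs_of_nonneg (hπpos x).le]; have := hπle x; linarith
  have h1πbd : ∀ x, |1 - π₁ x| ≤ 1 := fun x => by
    rw [abs_of_nonneg (h1πpos x).le]; have := hπge x; linarith
  have hA1 : ∀ ω, |A ω| ≤ 1 := fun ω => by rcases hAbin ω with h | h <;> simp [h]
  have hB1 : ∀ ω, |1 - A ω| ≤ 1 := fun ω => by rcases hAbin ω with h | h <;> simp [h]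
  -- L² facts
  have hcomp2 : ∀ (h : 𝒳 → ℝ), Measurable h → ∀ C : ℝ, (∀ x, |h x| ≤ C) →
      MemLp (fun ω => h (X ω)) 2 P := by
    intro h hh C hC
    refine MemLp.of_le (memLp_const C) (hh.comp hX).aestronglyMeasurable
      (Filter.Eventually.of_forall fun ω => ?_)
    have h0 : 0 ≤ C := le_trans (abs_nonneg _) (hC (X ω))
    simpa [Real.norm_eq_abs, abs_of_nonneg h0] using hC (X ω)
  have hA2 : MemLp A 2 P := by
    refine MemLp.of_le (memLp_const (1:ℝ)) hA.aestronglyMeasurable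
      (Filter.Eventually.of_forall fun ω => ?_)
    simpa [Real.norm_eq_abs] using hA1 ω
  have hBmeas : Measurable fun ω => 1 - A ω := measurable_const.sub hA
  have hB2 : MemLp (fun ω => 1 - A ω) 2 P := by
    refine MemLp.of_le (memLp_const (1:ℝ)) hBmeas.aestronglyMeasurable
      (Filter.Eventually.of_forall fun ω => ?_)
    simpa [Real.norm_eq_abs] using hB1 ω
  have hAY2 : MemLp (fun ω => A ω * Y ω) 2 P := memL2bddMul hA.aestronglyMeasurable hYL2 hA1
  have hBY2 : MemLp (fun ω => (1 - A ω) * Y ω) 2 P :=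
    memL2bddMul hBmeas.aestronglyMeasurable hYL2 hB1
  have hAint : Integrable A P := hA2.integrable one_le_two
  have hBint : Integrable (fun ω => 1 - A ω) P := hB2.integrable one_le_two
  have hAYint : Integrable (fun ω => A ω * Y ω) P := hAY2.integrable one_le_two
  have hBYint : Integrable (fun ω => (1 - A ω) * Y ω) P := hBY2.integrable one_le_two
  have hY2int : Integrable (fun ω => Y ω ^ 2) P := hYL2.integrable_sq
  have hAY2int : Integrable (fun ω => A ω * Y ω ^ 2) P :=
    intMulBddLeft hY2int hA.aestronglyMeasurable hA1
  have hBY2int : Integrable (fun ω => (1 - A ω) * Y ω ^ 2) P :=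
    intMulBddLeft hY2int hBmeas.aestronglyMeasurable hB1
  have aesmX : ∀ (h : 𝒳 → ℝ), Measurable h → AEStronglyMeasurable (fun ω => h (X ω)) P :=
    fun h hh => (hh.comp hX).aestronglyMeasurable
  have L2F1 : MemLp (fun ω => F1 (X ω)) 2 P := hcomp2 F1 hF1m _ hF1bd
  have L2F0 : MemLp (fun ω => F0 (X ω)) 2 P := hcomp2 F0 hF0m _ hF0bd
  have L2F1μ₁ : MemLp (fun ω => F1 (X ω) * μ₁ (X ω)) 2 P :=
    memL2bddMul (aesmX F1 hF1m) hμ₁L2 (fun ω => hF1bd (X ω))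
  have L2F0μ₀ : MemLp (fun ω => F0 (X ω) * μ₀ (X ω)) 2 P :=
    memL2bddMul (aesmX F0 hF0m) hμ₀L2 (fun ω => hF0bd (X ω))
  have L2V : MemLp (fun ω => V (X ω)) 2 P := by
    have : MemLp (fun ω => Dad (X ω) * μ₁ (X ω) + (1 - Dad (X ω)) * μ₀ (X ω)) 2 P := by
      refine MemLp.add ?_ ?_
      · exact memL2bddMul (aesmX Dad hDadm) hμ₁L2
          (fun ω => by rw [abs_of_nonneg (hDad01 (X ω)).1]; exact (hDad01 (X ω)).2)
      · refine memL2bddMul (aesmX _ (measurable_const.sub hDadm)) hμ₀L2 (C := 1) (fun ω => ?_)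
        have h1 := (hDad01 (X ω)).1; have h2 := (hDad01 (X ω)).2
        rw [abs_of_nonneg (by linarith)]; linarith
    exact this
  have L2W : MemLp W 2 P := by
    have t1 : MemLp (fun ω => F1 (X ω) * (A ω * Y ω)) 2 P :=
      memL2bddMul (aesmX F1 hF1m) hAY2 (fun ω => hF1bd (X ω))
    have t2 : MemLp (fun ω => F1 (X ω) * μ₁ (X ω) * A ω) 2 P :=
      memL2bddMul' L2F1μ₁ hA.aestronglyMeasurable hA1
    have t3 : MemLp (fun ω => F0 (X ω) * ((1 - A ω) * Y ω)) 2 P :=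
      memL2bddMul (aesmX F0 hF0m) hBY2 (fun ω => hF0bd (X ω))
    have t4 : MemLp (fun ω => F0 (X ω) * μ₀ (X ω) * (1 - A ω)) 2 P :=
      memL2bddMul' L2F0μ₀ hBmeas.aestronglyMeasurable hB1
    exact ((t1.sub t2).add t3).sub t4

  -- conditional expectation of 1 - A
  have hAint' := hAint
  have hcondB : P[(fun ω => 1 - A ω)|MeasurableSpace.comap X inferInstance]
      =ᵐ[P] fun ω => 1 - π₁ (X ω) := by
    have h1 := condExp_sub (μ := P) (m := MeasurableSpace.comap X inferInstance)
      (integrable_const (1:ℝ)) hAint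
    have h1' : P[(fun ω => 1 - A ω)|MeasurableSpace.comap X inferInstance]
        =ᵐ[P] P[(fun _ => (1:ℝ))|MeasurableSpace.comap X inferInstance]
          - P[A|MeasurableSpace.comap X inferInstance] := h1
    filter_upwards [h1', hcondA] with ω e1 e2
    rw [e1]
    simp only [Pi.sub_apply, condExp_const hm]
    rw [e2]
  -- pull-out templates
  have PA : ∀ (h : 𝒳 → ℝ), Measurable h → Integrable (fun ω => h (X ω) * A ω) P →
      ∫ ω, h (X ω) * A ω ∂P = ∫ ω, h (X ω) * π₁ (X ω) ∂P :=
    fun h hh hint => pullout hm (smc h hh) hAint hint hcondA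
  have PB : ∀ (h : 𝒳 → ℝ), Measurable h → Integrable (fun ω => h (X ω) * (1 - A ω)) P →
      ∫ ω, h (X ω) * (1 - A ω) ∂P = ∫ ω, h (X ω) * (1 - π₁ (X ω)) ∂P :=
    fun h hh hint => pullout hm (smc h hh) hBint hint hcondB
  have PAY : ∀ (h : 𝒳 → ℝ), Measurable h →
      Integrable (fun ω => h (X ω) * (A ω * Y ω)) P →
      ∫ ω, h (X ω) * (A ω * Y ω) ∂P = ∫ ω, h (X ω) * (μ₁ (X ω) * π₁ (X ω)) ∂P :=
    fun h hh hint => pullout hm (smc h hh) hAYint hint hcond1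
  have PBY : ∀ (h : 𝒳 → ℝ), Measurable h →
      Integrable (fun ω => h (X ω) * ((1 - A ω) * Y ω)) P →
      ∫ ω, h (X ω) * ((1 - A ω) * Y ω) ∂P
        = ∫ ω, h (X ω) * (μ₀ (X ω) * (1 - π₁ (X ω))) ∂P :=
    fun h hh hint => pullout hm (smc h hh) hBYint hint hcond0
  have PAY2 : ∀ (h : 𝒳 → ℝ), Measurable h →
      Integrable (fun ω => h (X ω) * (A ω * Y ω ^ 2)) P →
      ∫ ω, h (X ω) * (A ω * Y ω ^ 2) ∂P
        = ∫ ω, h (X ω) * ((μ₁ (X ω) ^ 2 + σ₁sq (X ω)) * π₁ (X ω)) ∂P :=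
    fun h hh hint => pullout hm (smc h hh) hAY2int hint hcondsq1
  have PBY2 : ∀ (h : 𝒳 → ℝ), Measurable h →
      Integrable (fun ω => h (X ω) * ((1 - A ω) * Y ω ^ 2)) P →
      ∫ ω, h (X ω) * ((1 - A ω) * Y ω ^ 2) ∂P
        = ∫ ω, h (X ω) * ((μ₀ (X ω) ^ 2 + σ₀sq (X ω)) * (1 - π₁ (X ω))) ∂P :=
    fun h hh hint => pullout hm (smc h hh) hBY2int hint hcondsq0
  -- E[W] = 0
  have hIt1 : Integrable (fun ω => F1 (X ω) * (A ω * Y ω)) P := intL2mul L2F1 hAY2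
  have hIt2 : Integrable (fun ω => F1 (X ω) * μ₁ (X ω) * A ω) P := intL2mul L2F1μ₁ hA2
  have hIt3 : Integrable (fun ω => F0 (X ω) * ((1 - A ω) * Y ω)) P := intL2mul L2F0 hBY2
  have hIt4 : Integrable (fun ω => F0 (X ω) * μ₀ (X ω) * (1 - A ω)) P := intL2mul L2F0μ₀ hB2
  have P1 : ∫ ω, F1 (X ω) * (A ω * Y ω) ∂P
      = ∫ ω, F1 (X ω) * (μ₁ (X ω) * π₁ (X ω)) ∂P := PAY F1 hF1m hIt1
  have P2 : ∫ ω, F1 (X ω) * μ₁ (X ω) * A ω ∂P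
      = ∫ ω, F1 (X ω) * μ₁ (X ω) * π₁ (X ω) ∂P :=
    PA (fun x => F1 x * μ₁ x) (hF1m.mul hμ₁m) hIt2
  have P3 : ∫ ω, F0 (X ω) * ((1 - A ω) * Y ω) ∂P
      = ∫ ω, F0 (X ω) * (μ₀ (X ω) * (1 - π₁ (X ω))) ∂P := PBY F0 hF0m hIt3
  have P4 : ∫ ω, F0 (X ω) * μ₀ (X ω) * (1 - A ω) ∂P
      = ∫ ω, F0 (X ω) * μ₀ (X ω) * (1 - π₁ (X ω)) ∂P :=
    PB (fun x => F0 x * μ₀ x) (hF0m.mul hμ₀m) hIt4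
  have hEW0 : ∫ ω, W ω ∂P = 0 := by
    have hsplit : ∫ ω, W ω ∂P = ∫ ω, F1 (X ω) * (A ω * Y ω) ∂P
        - ∫ ω, F1 (X ω) * μ₁ (X ω) * A ω ∂P
        + ∫ ω, F0 (X ω) * ((1 - A ω) * Y ω) ∂P
        - ∫ ω, F0 (X ω) * μ₀ (X ω) * (1 - A ω) ∂P := by
      have h12 : Integrable (fun ω => F1 (X ω) * (A ω * Y ω)
          - F1 (X ω) * μ₁ (X ω) * A ω) P := hIt1.sub hIt2
      have h123 : Integrable (fun ω => F1 (X ω) * (A ω * Y ω)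
          - F1 (X ω) * μ₁ (X ω) * A ω + F0 (X ω) * ((1 - A ω) * Y ω)) P := h12.add hIt3
      simp only [hWdef]
      rw [integral_sub h123 hIt4, integral_add h12 hIt3, integral_sub hIt1 hIt2]
    rw [hsplit, P1, P2, P3, P4]
    have e1 : ∫ ω, F1 (X ω) * (μ₁ (X ω) * π₁ (X ω)) ∂P
        = ∫ ω, F1 (X ω) * μ₁ (X ω) * π₁ (X ω) ∂P :=
      integral_congr_ae (Filter.Eventually.of_forall fun ω => by ring)
    have e0 : ∫ ω, F0 (X ω) * (μ₀ (X ω) * (1 - π₁ (X ω))) ∂P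
        = ∫ ω, F0 (X ω) * μ₀ (X ω) * (1 - π₁ (X ω)) ∂P :=
      integral_congr_ae (Filter.Eventually.of_forall fun ω => by ring)
    rw [e1, e0]; ring
  -- E[V·W] = 0
  have L2VF1 : MemLp (fun ω => V (X ω) * F1 (X ω)) 2 P :=
    memL2bddMul' L2V (aesmX F1 hF1m) (fun ω => hF1bd (X ω))
  have L2VF0 : MemLp (fun ω => V (X ω) * F0 (X ω)) 2 P :=
    memL2bddMul' L2V (aesmX F0 hF0m) (fun ω => hF0bd (X ω))
  have hJt1 : Integrable (fun ω => V (X ω) * F1 (X ω) * (A ω * Y ω)) P := intL2mul L2VF1 hAY2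
  have hJt2 : Integrable (fun ω => V (X ω) * F1 (X ω) * μ₁ (X ω) * A ω) P :=
    intMulBddRight (intL2mul L2VF1 hμ₁L2) hA.aestronglyMeasurable hA1
  have hJt3 : Integrable (fun ω => V (X ω) * F0 (X ω) * ((1 - A ω) * Y ω)) P :=
    intL2mul L2VF0 hBY2
  have hJt4 : Integrable (fun ω => V (X ω) * F0 (X ω) * μ₀ (X ω) * (1 - A ω)) P :=
    intMulBddRight (intL2mul L2VF0 hμ₀L2) hBmeas.aestronglyMeasurable hB1
  have Q1 : ∫ ω, V (X ω) * F1 (X ω) * (A ω * Y ω) ∂P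
      = ∫ ω, V (X ω) * F1 (X ω) * (μ₁ (X ω) * π₁ (X ω)) ∂P :=
    PAY (fun x => V x * F1 x) (hVm.mul hF1m) hJt1
  have Q2 : ∫ ω, V (X ω) * F1 (X ω) * μ₁ (X ω) * A ω ∂P
      = ∫ ω, V (X ω) * F1 (X ω) * μ₁ (X ω) * π₁ (X ω) ∂P :=
    PA (fun x => V x * F1 x * μ₁ x) ((hVm.mul hF1m).mul hμ₁m) hJt2
  have Q3 : ∫ ω, V (X ω) * F0 (X ω) * ((1 - A ω) * Y ω) ∂P
      = ∫ ω, V (X ω) * F0 (X ω) * (μ₀ (X ω) * (1 - π₁ (X ω))) ∂P :=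
    PBY (fun x => V x * F0 x) (hVm.mul hF0m) hJt3
  have Q4 : ∫ ω, V (X ω) * F0 (X ω) * μ₀ (X ω) * (1 - A ω) ∂P
      = ∫ ω, V (X ω) * F0 (X ω) * μ₀ (X ω) * (1 - π₁ (X ω)) ∂P :=
    PB (fun x => V x * F0 x * μ₀ x) ((hVm.mul hF0m).mul hμ₀m) hJt4
  have hEVW : ∫ ω, V (X ω) * W ω ∂P = 0 := by
    have hexp : (fun ω => V (X ω) * W ω)
        = fun ω => V (X ω) * F1 (X ω) * (A ω * Y ω)
          - V (X ω) * F1 (X ω) * μ₁ (X ω) * A ω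
          + V (X ω) * F0 (X ω) * ((1 - A ω) * Y ω)
          - V (X ω) * F0 (X ω) * μ₀ (X ω) * (1 - A ω) := by
      funext ω; simp only [hWdef]; ring
    have j12 : Integrable (fun ω => V (X ω) * F1 (X ω) * (A ω * Y ω)
        - V (X ω) * F1 (X ω) * μ₁ (X ω) * A ω) P := hJt1.sub hJt2
    have j123 : Integrable (fun ω => V (X ω) * F1 (X ω) * (A ω * Y ω)
        - V (X ω) * F1 (X ω) * μ₁ (X ω) * A ω
        + V (X ω) * F0 (X ω) * ((1 - A ω) * Y ω)) P := j12.add hJt3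
    rw [hexp, integral_sub j123 hJt4, integral_add j12 hJt3, integral_sub hJt1 hJt2,
      Q1, Q2, Q3, Q4]
    have e1 : ∫ ω, V (X ω) * F1 (X ω) * (μ₁ (X ω) * π₁ (X ω)) ∂P
        = ∫ ω, V (X ω) * F1 (X ω) * μ₁ (X ω) * π₁ (X ω) ∂P :=
      integral_congr_ae (Filter.Eventually.of_forall fun ω => by ring)
    have e0 : ∫ ω, V (X ω) * F0 (X ω) * (μ₀ (X ω) * (1 - π₁ (X ω))) ∂P
        = ∫ ω, V (X ω) * F0 (X ω) * μ₀ (X ω) * (1 - π₁ (X ω)) ∂P :=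
      integral_congr_ae (Filter.Eventually.of_forall fun ω => by ring)
    rw [e1, e0]; ring
  -- E[W²]
  have aesmF1sq : AEStronglyMeasurable (fun ω => F1 (X ω) ^ 2) P :=
    aesmX (fun x => F1 x ^ 2) (hF1m.pow_const 2)
  have aesmF0sq : AEStronglyMeasurable (fun ω => F0 (X ω) ^ 2) P :=
    aesmX (fun x => F0 x ^ 2) (hF0m.pow_const 2)
  have hKt1 : Integrable (fun ω => F1 (X ω) ^ 2 * (A ω * Y ω ^ 2)) P :=
    intMulBddLeft hAY2int aesmF1sq (fun ω => hF1sqbd (X ω))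
  have hKt2 : Integrable (fun ω => F1 (X ω) ^ 2 * μ₁ (X ω) * (A ω * Y ω)) P :=
    intL2mul (memL2bddMul aesmF1sq hμ₁L2 (fun ω => hF1sqbd (X ω))) hAY2
  have hμ₁sqint : Integrable (fun ω => μ₁ (X ω) ^ 2) P := hμ₁L2.integrable_sq
  have hμ₀sqint : Integrable (fun ω => μ₀ (X ω) ^ 2) P := hμ₀L2.integrable_sq
  have hKt3 : Integrable (fun ω => F1 (X ω) ^ 2 * μ₁ (X ω) ^ 2 * A ω) P := by
    refine intMulBddRight ?_ hA.aestronglyMeasurable hA1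
    exact intMulBddLeft hμ₁sqint aesmF1sq (fun ω => hF1sqbd (X ω))
  have hKt4 : Integrable (fun ω => F0 (X ω) ^ 2 * ((1 - A ω) * Y ω ^ 2)) P :=
    intMulBddLeft hBY2int aesmF0sq (fun ω => hF0sqbd (X ω))
  have hKt5 : Integrable (fun ω => F0 (X ω) ^ 2 * μ₀ (X ω) * ((1 - A ω) * Y ω)) P :=
    intL2mul (memL2bddMul aesmF0sq hμ₀L2 (fun ω => hF0sqbd (X ω))) hBY2
  have hKt6 : Integrable (fun ω => F0 (X ω) ^ 2 * μ₀ (X ω) ^ 2 * (1 - A ω)) P := by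
    refine intMulBddRight ?_ hBmeas.aestronglyMeasurable hB1
    exact intMulBddLeft hμ₀sqint aesmF0sq (fun ω => hF0sqbd (X ω))
  have hKk1 : Integrable (fun ω => F1 (X ω) ^ 2 * ((μ₁ (X ω) ^ 2 + σ₁sq (X ω)) * π₁ (X ω))) P := by
    refine intMulBddLeft ?_ aesmF1sq (fun ω => hF1sqbd (X ω))
    exact intMulBddRight (hμ₁sqint.add hσ₁L1) (aesmX π₁ hπ₁m) (fun ω => hπbd (X ω))
  have hKk2 : Integrable (fun ω => F1 (X ω) ^ 2 * μ₁ (X ω) * (μ₁ (X ω) * π₁ (X ω))) P :=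
    intL2mul (memL2bddMul aesmF1sq hμ₁L2 (fun ω => hF1sqbd (X ω)))
      (memL2bddMul' hμ₁L2 (aesmX π₁ hπ₁m) (fun ω => hπbd (X ω)))
  have hKk3 : Integrable (fun ω => F1 (X ω) ^ 2 * μ₁ (X ω) ^ 2 * π₁ (X ω)) P := by
    refine intMulBddRight ?_ (aesmX π₁ hπ₁m) (fun ω => hπbd (X ω))
    exact intMulBddLeft hμ₁sqint aesmF1sq (fun ω => hF1sqbd (X ω))
  have hKk4 : Integrable
      (fun ω => F0 (X ω) ^ 2 * ((μ₀ (X ω) ^ 2 + σ₀sq (X ω)) * (1 - π₁ (X ω)))) P := by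
    refine intMulBddLeft ?_ aesmF0sq (fun ω => hF0sqbd (X ω))
    exact intMulBddRight (hμ₀sqint.add hσ₀L1) (aesmX _ (measurable_const.sub hπ₁m))
      (fun ω => h1πbd (X ω))
  have hKk5 : Integrable (fun ω => F0 (X ω) ^ 2 * μ₀ (X ω) * (μ₀ (X ω) * (1 - π₁ (X ω)))) P :=
    intL2mul (memL2bddMul aesmF0sq hμ₀L2 (fun ω => hF0sqbd (X ω)))
      (memL2bddMul' hμ₀L2 (aesmX _ (measurable_const.sub hπ₁m)) (fun ω => h1πbd (X ω)))
  have hKk6 : Integrable (fun ω => F0 (X ω) ^ 2 * μ₀ (X ω) ^ 2 * (1 - π₁ (X ω))) P := by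
    refine intMulBddRight ?_ (aesmX _ (measurable_const.sub hπ₁m)) (fun ω => h1πbd (X ω))
    exact intMulBddLeft hμ₀sqint aesmF0sq (fun ω => hF0sqbd (X ω))
  have R1 : ∫ ω, F1 (X ω) ^ 2 * (A ω * Y ω ^ 2) ∂P
      = ∫ ω, F1 (X ω) ^ 2 * ((μ₁ (X ω) ^ 2 + σ₁sq (X ω)) * π₁ (X ω)) ∂P :=
    PAY2 (fun x => F1 x ^ 2) (hF1m.pow_const 2) hKt1
  have R2 : ∫ ω, F1 (X ω) ^ 2 * μ₁ (X ω) * (A ω * Y ω) ∂P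
      = ∫ ω, F1 (X ω) ^ 2 * μ₁ (X ω) * (μ₁ (X ω) * π₁ (X ω)) ∂P :=
    PAY (fun x => F1 x ^ 2 * μ₁ x) ((hF1m.pow_const 2).mul hμ₁m) hKt2
  have R3 : ∫ ω, F1 (X ω) ^ 2 * μ₁ (X ω) ^ 2 * A ω ∂P
      = ∫ ω, F1 (X ω) ^ 2 * μ₁ (X ω) ^ 2 * π₁ (X ω) ∂P :=
    PA (fun x => F1 x ^ 2 * μ₁ x ^ 2) ((hF1m.pow_const 2).mul (hμ₁m.pow_const 2)) hKt3
  have R4 : ∫ ω, F0 (X ω) ^ 2 * ((1 - A ω) * Y ω ^ 2) ∂P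
      = ∫ ω, F0 (X ω) ^ 2 * ((μ₀ (X ω) ^ 2 + σ₀sq (X ω)) * (1 - π₁ (X ω))) ∂P :=
    PBY2 (fun x => F0 x ^ 2) (hF0m.pow_const 2) hKt4
  have R5 : ∫ ω, F0 (X ω) ^ 2 * μ₀ (X ω) * ((1 - A ω) * Y ω) ∂P
      = ∫ ω, F0 (X ω) ^ 2 * μ₀ (X ω) * (μ₀ (X ω) * (1 - π₁ (X ω))) ∂P :=
    PBY (fun x => F0 x ^ 2 * μ₀ x) ((hF0m.pow_const 2).mul hμ₀m) hKt5
  have R6 : ∫ ω, F0 (X ω) ^ 2 * μ₀ (X ω) ^ 2 * (1 - A ω) ∂P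
      = ∫ ω, F0 (X ω) ^ 2 * μ₀ (X ω) ^ 2 * (1 - π₁ (X ω)) ∂P :=
    PB (fun x => F0 x ^ 2 * μ₀ x ^ 2) ((hF0m.pow_const 2).mul (hμ₀m.pow_const 2)) hKt6
  have k2 : Integrable (fun ω => 2 * (F1 (X ω) ^ 2 * μ₁ (X ω) * (A ω * Y ω))) P :=
    hKt2.const_mul 2
  have k5 : Integrable (fun ω => 2 * (F0 (X ω) ^ 2 * μ₀ (X ω) * ((1 - A ω) * Y ω))) P :=
    hKt5.const_mul 2
  have kk2 : Integrable (fun ω => 2 * (F1 (X ω) ^ 2 * μ₁ (X ω) * (μ₁ (X ω) * π₁ (X ω)))) P :=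
    hKk2.const_mul 2
  have kk5 : Integrable
      (fun ω => 2 * (F0 (X ω) ^ 2 * μ₀ (X ω) * (μ₀ (X ω) * (1 - π₁ (X ω))))) P :=
    hKk5.const_mul 2
  have k12 : Integrable (fun ω => F1 (X ω) ^ 2 * (A ω * Y ω ^ 2)
      - 2 * (F1 (X ω) ^ 2 * μ₁ (X ω) * (A ω * Y ω))) P := hKt1.sub k2
  have k45 : Integrable (fun ω => F0 (X ω) ^ 2 * ((1 - A ω) * Y ω ^ 2)
      - 2 * (F0 (X ω) ^ 2 * μ₀ (X ω) * ((1 - A ω) * Y ω))) P := hKt4.sub k5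
  have kk12 : Integrable (fun ω => F1 (X ω) ^ 2 * ((μ₁ (X ω) ^ 2 + σ₁sq (X ω)) * π₁ (X ω))
      - 2 * (F1 (X ω) ^ 2 * μ₁ (X ω) * (μ₁ (X ω) * π₁ (X ω)))) P := hKk1.sub kk2
  have kk45 : Integrable
      (fun ω => F0 (X ω) ^ 2 * ((μ₀ (X ω) ^ 2 + σ₀sq (X ω)) * (1 - π₁ (X ω)))
      - 2 * (F0 (X ω) ^ 2 * μ₀ (X ω) * (μ₀ (X ω) * (1 - π₁ (X ω))))) P := hKk4.sub kk5
  have hG1 : ∫ ω, (F1 (X ω) ^ 2 * (A ω * Y ω ^ 2)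
        - 2 * (F1 (X ω) ^ 2 * μ₁ (X ω) * (A ω * Y ω))
        + F1 (X ω) ^ 2 * μ₁ (X ω) ^ 2 * A ω) ∂P
      = ∫ ω, F1 (X ω) ^ 2 * (σ₁sq (X ω) * π₁ (X ω)) ∂P := by
    have hre : ∫ ω, (F1 (X ω) ^ 2 * ((μ₁ (X ω) ^ 2 + σ₁sq (X ω)) * π₁ (X ω))
        - 2 * (F1 (X ω) ^ 2 * μ₁ (X ω) * (μ₁ (X ω) * π₁ (X ω)))
        + F1 (X ω) ^ 2 * μ₁ (X ω) ^ 2 * π₁ (X ω)) ∂P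
        = ∫ ω, F1 (X ω) ^ 2 * (σ₁sq (X ω) * π₁ (X ω)) ∂P :=
      integral_congr_ae (Filter.Eventually.of_forall fun ω => by ring)
    rw [integral_add k12 hKt3, integral_sub hKt1 k2, integral_const_mul 2 _, R1, R2, R3,
      ← hre, integral_add kk12 hKk3, integral_sub hKk1 kk2, integral_const_mul 2 _]
  have hG0 : ∫ ω, (F0 (X ω) ^ 2 * ((1 - A ω) * Y ω ^ 2)
        - 2 * (F0 (X ω) ^ 2 * μ₀ (X ω) * ((1 - A ω) * Y ω))
        + F0 (X ω) ^ 2 * μ₀ (X ω) ^ 2 * (1 - A ω)) ∂P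
      = ∫ ω, F0 (X ω) ^ 2 * (σ₀sq (X ω) * (1 - π₁ (X ω))) ∂P := by
    have hre : ∫ ω, (F0 (X ω) ^ 2 * ((μ₀ (X ω) ^ 2 + σ₀sq (X ω)) * (1 - π₁ (X ω)))
        - 2 * (F0 (X ω) ^ 2 * μ₀ (X ω) * (μ₀ (X ω) * (1 - π₁ (X ω))))
        + F0 (X ω) ^ 2 * μ₀ (X ω) ^ 2 * (1 - π₁ (X ω))) ∂P
        = ∫ ω, F0 (X ω) ^ 2 * (σ₀sq (X ω) * (1 - π₁ (X ω))) ∂P :=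
      integral_congr_ae (Filter.Eventually.of_forall fun ω => by ring)
    rw [integral_add k45 hKt6, integral_sub hKt4 k5, integral_const_mul 2 _, R4, R5, R6,
      ← hre, integral_add kk45 hKk6, integral_sub hKk4 kk5, integral_const_mul 2 _]
  -- replace σ₁sq, σ₀sq by σsq
  have hae1 : (fun ω => σ₁sq (X ω)) =ᵐ[P] fun ω => σsq (X ω) :=
    ae_of_ae_map hX.aemeasurable hhomo1
  have hae0 : (fun ω => σ₀sq (X ω)) =ᵐ[P] fun ω => σsq (X ω) :=
    ae_of_ae_map hX.aemeasurable hhomo0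
  have hrep1 : ∫ ω, F1 (X ω) ^ 2 * (σ₁sq (X ω) * π₁ (X ω)) ∂P
      = ∫ ω, F1 (X ω) ^ 2 * (σsq (X ω) * π₁ (X ω)) ∂P :=
    integral_congr_ae (by filter_upwards [hae1] with ω h; rw [h])
  have hrep0 : ∫ ω, F0 (X ω) ^ 2 * (σ₀sq (X ω) * (1 - π₁ (X ω))) ∂P
      = ∫ ω, F0 (X ω) ^ 2 * (σsq (X ω) * (1 - π₁ (X ω))) ∂P :=
    integral_congr_ae (by filter_upwards [hae0] with ω h; rw [h])
  -- pointwise identification of the weights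
  have hpt1 : ∀ x, F1 x ^ 2 * (σsq x * π₁ x)
      = σsq x * ((if 0 < μ₁ x - μ₀ x then (1:ℝ) else 0) / π₁ x
        + (if μ₁ x - μ₀ x = 0 then (1:ℝ) else 0) * π₁ x) := by
    intro x
    rcases lt_trichotomy (μ₁ x - μ₀ x) 0 with h | h | h
    · rw [if_neg (by linarith), if_neg h.ne, show F1 x = Dad x / π₁ x from rfl, hDneg x h]
      ring
    · rw [if_neg (by rw [h]; exact lt_irrefl 0), if_pos h,
        show F1 x = Dad x / π₁ x from rfl, hDzero x h, div_self (hπpos x).ne']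
      ring
    · rw [if_pos h, if_neg h.ne', show F1 x = Dad x / π₁ x from rfl, hDpos x h]
      field_simp [(hπpos x).ne']
      ring
  have hpt0 : ∀ x, F0 x ^ 2 * (σsq x * (1 - π₁ x))
      = σsq x * ((if μ₁ x - μ₀ x < 0 then (1:ℝ) else 0) / (1 - π₁ x)
        + (if μ₁ x - μ₀ x = 0 then (1:ℝ) else 0) * (1 - π₁ x)) := by
    intro x
    rcases lt_trichotomy (μ₁ x - μ₀ x) 0 with h | h | h
    · rw [if_pos h, if_neg h.ne, show F0 x = (1 - Dad x) / (1 - π₁ x) from rfl, hDneg x h]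
      field_simp [(h1πpos x).ne']
      ring
    · rw [if_neg (by rw [h]; exact lt_irrefl 0), if_pos h,
        show F0 x = (1 - Dad x) / (1 - π₁ x) from rfl, hDzero x h, div_self (h1πpos x).ne']
      ring
    · rw [if_neg (by linarith), if_neg h.ne', show F0 x = (1 - Dad x) / (1 - π₁ x) from rfl,
        hDpos x h]
      ring
  have hconv1 : ∫ ω, F1 (X ω) ^ 2 * (σsq (X ω) * π₁ (X ω)) ∂P
      = ∫ ω, σsq (X ω) * ((if 0 < μ₁ (X ω) - μ₀ (X ω) then (1:ℝ) else 0) / π₁ (X ω)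
          + (if μ₁ (X ω) - μ₀ (X ω) = 0 then (1:ℝ) else 0) * π₁ (X ω)) ∂P :=
    integral_congr_ae (Filter.Eventually.of_forall fun ω => hpt1 (X ω))
  have hconv0 : ∫ ω, F0 (X ω) ^ 2 * (σsq (X ω) * (1 - π₁ (X ω))) ∂P
      = ∫ ω, σsq (X ω) * ((if μ₁ (X ω) - μ₀ (X ω) < 0 then (1:ℝ) else 0) / (1 - π₁ (X ω))
          + (if μ₁ (X ω) - μ₀ (X ω) = 0 then (1:ℝ) else 0) * (1 - π₁ (X ω))) ∂P :=
    integral_congr_ae (Filter.Eventually.of_forall fun ω => hpt0 (X ω))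
  -- integrability of the σ-weighted terms
  have hσXint : Integrable (fun ω => σsq (X ω)) P := hσ₁L1.congr hae1
  have hbE1π : ∀ x, |(if 0 < μ₁ x - μ₀ x then (1:ℝ) else 0) / π₁ x| ≤ 1 / c := by
    intro x; split_ifs with h
    · rw [abs_div, abs_one, abs_of_pos (hπpos x)]
      exact one_div_le_one_div_of_le hc0 (hπge x)
    · rw [zero_div, abs_zero]; positivity
  have hbE0π : ∀ x, |(if μ₁ x - μ₀ x < 0 then (1:ℝ) else 0) / (1 - π₁ x)| ≤ 1 / c := by
    intro x; split_ifs with h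
    · rw [abs_div, abs_one, abs_of_pos (h1πpos x)]
      exact one_div_le_one_div_of_le hc0 (h1πge x)
    · rw [zero_div, abs_zero]; positivity
  have hbEE : ∀ x, |(if μ₁ x - μ₀ x = 0 then (1:ℝ) else 0)| ≤ 1 := by
    intro x; split_ifs <;> simp
  have hbEEπ : ∀ x, |(if μ₁ x - μ₀ x = 0 then (1:ℝ) else 0) * π₁ x| ≤ 1 := by
    intro x; rw [abs_mul]
    exact mul_le_one₀ (hbEE x) (abs_nonneg _) (hπbd x)
  have hbEE1π : ∀ x, |(if μ₁ x - μ₀ x = 0 then (1:ℝ) else 0) * (1 - π₁ x)| ≤ 1 := by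
    intro x; rw [abs_mul]
    exact mul_le_one₀ (hbEE x) (abs_nonneg _) (h1πbd x)
  have hI_a : Integrable (fun ω => σsq (X ω)
      * ((if 0 < μ₁ (X ω) - μ₀ (X ω) then (1:ℝ) else 0) / π₁ (X ω)
        + (if μ₁ (X ω) - μ₀ (X ω) = 0 then (1:ℝ) else 0) * π₁ (X ω))) P := by
    refine intMulBddRight hσXint (aesmX _ ((hE1m.div hπ₁m).add (hEEm.mul hπ₁m)))
      (C := 1 / c + 1) (fun ω => ?_)
    exact (abs_add_le _ _).trans (add_le_add (hbE1π (X ω)) (hbEEπ (X ω)))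
  have hI_b : Integrable (fun ω => σsq (X ω)
      * ((if μ₁ (X ω) - μ₀ (X ω) < 0 then (1:ℝ) else 0) / (1 - π₁ (X ω))
        + (if μ₁ (X ω) - μ₀ (X ω) = 0 then (1:ℝ) else 0) * (1 - π₁ (X ω)))) P := by
    refine intMulBddRight hσXint
      (aesmX _ ((hE0m.div (measurable_const.sub hπ₁m)).add
        (hEEm.mul (measurable_const.sub hπ₁m)))) (C := 1 / c + 1) (fun ω => ?_)
    exact (abs_add_le _ _).trans (add_le_add (hbE0π (X ω)) (hbEE1π (X ω)))
  have hI_J1 : Integrable (fun ω => σsq (X ω)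
      * ((if 0 < μ₁ (X ω) - μ₀ (X ω) then (1:ℝ) else 0) / π₁ (X ω)
        + (if μ₁ (X ω) - μ₀ (X ω) < 0 then (1:ℝ) else 0) / (1 - π₁ (X ω)))) P := by
    refine intMulBddRight hσXint
      (aesmX _ ((hE1m.div hπ₁m).add (hE0m.div (measurable_const.sub hπ₁m))))
      (C := 1 / c + 1 / c) (fun ω => ?_)
    exact (abs_add_le _ _).trans (add_le_add (hbE1π (X ω)) (hbE0π (X ω)))
  have hI_J2 : Integrable (fun ω => σsq (X ω)
      * (if μ₁ (X ω) - μ₀ (X ω) = 0 then (1:ℝ) else 0)) P :=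
    intMulBddRight hσXint (aesmX _ hEEm) (C := 1) (fun ω => hbEE (X ω))
  -- E[W²] = J1 + J2
  have hEW2 : ∫ ω, W ω ^ 2 ∂P
      = (∫ ω, σsq (X ω) * ((if 0 < μ₁ (X ω) - μ₀ (X ω) then (1:ℝ) else 0) / π₁ (X ω)
          + (if μ₁ (X ω) - μ₀ (X ω) < 0 then (1:ℝ) else 0) / (1 - π₁ (X ω))) ∂P)
        + ∫ ω, σsq (X ω) * (if μ₁ (X ω) - μ₀ (X ω) = 0 then (1:ℝ) else 0) ∂P := by
    have hid : (fun ω => W ω ^ 2)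
        = fun ω => (F1 (X ω) ^ 2 * (A ω * Y ω ^ 2)
            - 2 * (F1 (X ω) ^ 2 * μ₁ (X ω) * (A ω * Y ω))
            + F1 (X ω) ^ 2 * μ₁ (X ω) ^ 2 * A ω)
          + (F0 (X ω) ^ 2 * ((1 - A ω) * Y ω ^ 2)
            - 2 * (F0 (X ω) ^ 2 * μ₀ (X ω) * ((1 - A ω) * Y ω))
            + F0 (X ω) ^ 2 * μ₀ (X ω) ^ 2 * (1 - A ω)) := by
      funext ω; simp only [hWdef]
      rcases hAbin ω with h | h <;> rw [h] <;> ring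
    calc ∫ ω, W ω ^ 2 ∂P
        = ∫ ω, (F1 (X ω) ^ 2 * (A ω * Y ω ^ 2)
            - 2 * (F1 (X ω) ^ 2 * μ₁ (X ω) * (A ω * Y ω))
            + F1 (X ω) ^ 2 * μ₁ (X ω) ^ 2 * A ω) ∂P
          + ∫ ω, (F0 (X ω) ^ 2 * ((1 - A ω) * Y ω ^ 2)
            - 2 * (F0 (X ω) ^ 2 * μ₀ (X ω) * ((1 - A ω) * Y ω))
            + F0 (X ω) ^ 2 * μ₀ (X ω) ^ 2 * (1 - A ω)) ∂P := by
          have g1int : Integrable (fun ω => F1 (X ω) ^ 2 * (A ω * Y ω ^ 2)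
              - 2 * (F1 (X ω) ^ 2 * μ₁ (X ω) * (A ω * Y ω))
              + F1 (X ω) ^ 2 * μ₁ (X ω) ^ 2 * A ω) P := k12.add hKt3
          have g0int : Integrable (fun ω => F0 (X ω) ^ 2 * ((1 - A ω) * Y ω ^ 2)
              - 2 * (F0 (X ω) ^ 2 * μ₀ (X ω) * ((1 - A ω) * Y ω))
              + F0 (X ω) ^ 2 * μ₀ (X ω) ^ 2 * (1 - A ω)) P := k45.add hKt6
          rw [hid, integral_add g1int g0int]
      _ = ∫ ω, σsq (X ω) * ((if 0 < μ₁ (X ω) - μ₀ (X ω) then (1:ℝ) else 0) / π₁ (X ω)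
            + (if μ₁ (X ω) - μ₀ (X ω) = 0 then (1:ℝ) else 0) * π₁ (X ω)) ∂P
          + ∫ ω, σsq (X ω) * ((if μ₁ (X ω) - μ₀ (X ω) < 0 then (1:ℝ) else 0) / (1 - π₁ (X ω))
            + (if μ₁ (X ω) - μ₀ (X ω) = 0 then (1:ℝ) else 0) * (1 - π₁ (X ω))) ∂P := by
          rw [hG1, hG0, hrep1, hrep0, hconv1, hconv0]
      _ = ∫ ω, (σsq (X ω) * ((if 0 < μ₁ (X ω) - μ₀ (X ω) then (1:ℝ) else 0) / π₁ (X ω)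
            + (if μ₁ (X ω) - μ₀ (X ω) < 0 then (1:ℝ) else 0) / (1 - π₁ (X ω)))
          + σsq (X ω) * (if μ₁ (X ω) - μ₀ (X ω) = 0 then (1:ℝ) else 0)) ∂P := by
          have eadd : ∫ ω, (σsq (X ω)
              * ((if 0 < μ₁ (X ω) - μ₀ (X ω) then (1:ℝ) else 0) / π₁ (X ω)
                + (if μ₁ (X ω) - μ₀ (X ω) = 0 then (1:ℝ) else 0) * π₁ (X ω))
              + σsq (X ω)
              * ((if μ₁ (X ω) - μ₀ (X ω) < 0 then (1:ℝ) else 0) / (1 - π₁ (X ω))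
                + (if μ₁ (X ω) - μ₀ (X ω) = 0 then (1:ℝ) else 0) * (1 - π₁ (X ω)))) ∂P
              = ∫ ω, σsq (X ω) * ((if 0 < μ₁ (X ω) - μ₀ (X ω) then (1:ℝ) else 0) / π₁ (X ω)
                + (if μ₁ (X ω) - μ₀ (X ω) = 0 then (1:ℝ) else 0) * π₁ (X ω)) ∂P
              + ∫ ω, σsq (X ω)
                * ((if μ₁ (X ω) - μ₀ (X ω) < 0 then (1:ℝ) else 0) / (1 - π₁ (X ω))
                + (if μ₁ (X ω) - μ₀ (X ω) = 0 then (1:ℝ) else 0) * (1 - π₁ (X ω))) ∂P :=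
            integral_add hI_a hI_b
          have econg : ∫ ω, (σsq (X ω)
              * ((if 0 < μ₁ (X ω) - μ₀ (X ω) then (1:ℝ) else 0) / π₁ (X ω)
                + (if μ₁ (X ω) - μ₀ (X ω) = 0 then (1:ℝ) else 0) * π₁ (X ω))
              + σsq (X ω)
              * ((if μ₁ (X ω) - μ₀ (X ω) < 0 then (1:ℝ) else 0) / (1 - π₁ (X ω))
                + (if μ₁ (X ω) - μ₀ (X ω) = 0 then (1:ℝ) else 0) * (1 - π₁ (X ω)))) ∂P
              = ∫ ω, (σsq (X ω)
              * ((if 0 < μ₁ (X ω) - μ₀ (X ω) then (1:ℝ) else 0) / π₁ (X ω)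
                + (if μ₁ (X ω) - μ₀ (X ω) < 0 then (1:ℝ) else 0) / (1 - π₁ (X ω)))
              + σsq (X ω) * (if μ₁ (X ω) - μ₀ (X ω) = 0 then (1:ℝ) else 0)) ∂P :=
            integral_congr_ae (Filter.Eventually.of_forall fun ω => by ring)
          rw [← eadd, econg]
      _ = _ := integral_add hI_J1 hI_J2
  -- identification of V with the d₀-expression
  have hVd : ∀ x, d₀ x * μ₁ x + (1 - d₀ x) * μ₀ x = V x := by
    intro x
    rcases lt_trichotomy (μ₁ x - μ₀ x) 0 with h | h | h
    · rw [hd₀ x, if_neg (by linarith),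
        show V x = Dad x * μ₁ x + (1 - Dad x) * μ₀ x from rfl, hDneg x h]
    · rw [hd₀ x, if_neg (by rw [h]; exact lt_irrefl 0),
        show V x = Dad x * μ₁ x + (1 - Dad x) * μ₀ x from rfl, hDzero x h]
      have hμ : μ₁ x = μ₀ x := by linarith
      rw [hμ]; ring
    · rw [hd₀ x, if_pos h,
        show V x = Dad x * μ₁ x + (1 - Dad x) * μ₀ x from rfl, hDpos x h]
  have hVdfun : (fun ω => d₀ (X ω) * μ₁ (X ω) + (1 - d₀ (X ω)) * μ₀ (X ω))
      = fun ω => V (X ω) := funext fun ω => hVd (X ω)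
  -- decomposition of the AIPW score
  have hpsi : aipw X A Y Dad π₁ μ₁ μ₀ = fun ω => V (X ω) + W ω := by
    funext ω
    rcases hAbin ω with h | h <;>
      simp only [aipw, hWdef, hVdef, hF1def, hF0def, h] <;> ring
  have L2ψ : MemLp (aipw X A Y Dad π₁ μ₁ μ₀) 2 P := by
    rw [hpsi]; exact L2V.add L2W
  have L2Vd : MemLp (fun ω => d₀ (X ω) * μ₁ (X ω) + (1 - d₀ (X ω)) * μ₀ (X ω)) 2 P := by
    rw [hVdfun]; exact L2V
  have hVint : Integrable (fun ω => V (X ω)) P := L2V.integrable one_le_two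
  have hWint : Integrable W P := L2W.integrable one_le_two
  have hVWint : Integrable (fun ω => V (X ω) * W ω) P := intL2mul L2V L2W
  have hV2int : Integrable (fun ω => V (X ω) ^ 2) P := L2V.integrable_sq
  have hW2int : Integrable (fun ω => W ω ^ 2) P := L2W.integrable_sq
  -- final assembly
  rw [variance_eq_sub L2ψ, variance_eq_sub L2Vd, hVdfun, hpsi]
  simp only [Pi.pow_apply]
  have hsq : ∫ a, (V (X a) + W a) ^ 2 ∂P
      = ∫ a, V (X a) ^ 2 ∂P + (2 * ∫ a, V (X a) * W a ∂P + ∫ a, W a ^ 2 ∂P) := by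
    rw [show (fun a => (V (X a) + W a) ^ 2)
        = fun a => V (X a) ^ 2 + (2 * (V (X a) * W a) + W a ^ 2) from
      funext fun a => by ring]
    have w2 : Integrable (fun a => 2 * (V (X a) * W a)) P := hVWint.const_mul 2
    have w23 : Integrable (fun a => 2 * (V (X a) * W a) + W a ^ 2) P := w2.add hW2int
    rw [integral_add hV2int w23, integral_add w2 hW2int, integral_const_mul 2 _]
  have hlin : ∫ a, (V (X a) + W a) ∂P = ∫ a, V (X a) ∂P := by
    rw [integral_add hVint hWint, hEW0, add_zero]
  rw [hsq, hlin, hEVW, hEW2]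
  ring
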